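/- For real α, β with β > -1 and -n < α < -1, α ∉ ℤ, set k = ⌊-α⌋. Then the Jacobi polynomial P_n^{(α,β)} satisfies ∫_{-1}^1 q(t) P_n^{(α,β)}(t) (1-t)^{α+k} (1+t)^β dt = 0 for every polynomial q of degree ≤ n - k - 1, while the integral is nonzero for q(t) = t^{n-k}. -/
import Mathlib


open Finset Polynomial

/-- Generalized binomial coefficient `C(x, m) = x(x-1)⋯(x-m+1)/m!` for real `x`. -/
noncomputable def gbinomR (x : ℝ) (m : ℕ) : ℝ :=
  (∏ i ∈ Finset.range m, (x - i)) / (Nat.factorial m)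

/-- The Jacobi polynomial `P_n^{(α,β)}` for real parameters, as a real polynomial. -/
noncomputable def jacobiR (n : ℕ) (α β : ℝ) : Polynomial ℝ :=
  (2 : ℝ)⁻¹ ^ n • ∑ j ∈ Finset.range (n + 1),
    Polynomial.C (gbinomR ((n : ℝ) + α) (n - j) * gbinomR ((n : ℝ) + β) j) *
      (Polynomial.X - 1) ^ j * (Polynomial.X + 1) ^ (n - j)


open MeasureTheory Set

lemma taylor_one_coeff_aux (n : ℕ) (p : Polynomial ℝ) (hp : p.natDegree ≤ n + 1) :
    (Polynomial.taylor 1 p).coeff n = p.coeff n + (n+1) * p.coeff (n+1) := by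
  rw [Polynomial.taylor_coeff]
  rw [Polynomial.eval_eq_sum_range' (n := 2) ?_]
  · simp only [Finset.sum_range_succ, Finset.sum_range_zero, Polynomial.hasseDeriv_coeff,
      one_pow, mul_one, zero_add, pow_zero, pow_one]
    have h2 : (1 + n).choose n = n + 1 := by
      rw [add_comm, Nat.choose_succ_self_right]
    rw [h2, Nat.choose_self, add_comm 1 n]; push_cast; ring
  · have := Polynomial.natDegree_hasseDeriv_le p n
    have h3 : (Polynomial.hasseDeriv n p).natDegree ≤ 1 := le_trans this (by omega)
    omega

lemma fd_sum : ∀ (n : ℕ) (p : Polynomial ℝ), p.natDegree ≤ n →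
    ∑ j ∈ Finset.range (n+1), (-1:ℝ)^j * (n.choose j : ℝ) * p.eval (j:ℝ)
      = (-1)^n * (Nat.factorial n) * p.coeff n := by
  intro n
  induction n with
  | zero =>
    intro p hp
    simp [Polynomial.coeff_zero_eq_eval_zero]
  | succ n ih =>
    intro p hp
    set g : ℕ → ℝ := fun j => (-1:ℝ)^j * (n.choose j : ℝ) * p.eval (j:ℝ) with hg
    have key : ∑ j ∈ Finset.range (n+2), (-1:ℝ)^j * ((n+1).choose j : ℝ) * p.eval (j:ℝ)
        = ∑ j ∈ Finset.range (n+1), (-1:ℝ)^j * (n.choose j : ℝ)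
            * (p.eval (j:ℝ) - p.eval ((j:ℝ)+1)) := by
      rw [Finset.sum_range_succ' (fun j => (-1:ℝ)^j * ((n+1).choose j : ℝ) * p.eval (j:ℝ)) (n+1)]
      have e2 : ∀ j ∈ Finset.range (n+1),
          (-1:ℝ)^(j+1) * ((n+1).choose (j+1) : ℝ) * p.eval ((j+1:ℕ):ℝ)
          = (-1:ℝ)^(j+1) * (n.choose (j+1) : ℝ) * p.eval (((j+1:ℕ)):ℝ)
            + (-1:ℝ) * ((-1:ℝ)^j * (n.choose j : ℝ) * p.eval ((j:ℝ)+1)) := by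
        intro j _
        rw [Nat.choose_succ_succ]
        push_cast
        ring
      rw [Finset.sum_congr rfl e2, Finset.sum_add_distrib, ← Finset.mul_sum]
      have e3 : ∑ j ∈ Finset.range (n+1),
          (-1:ℝ)^(j+1) * (n.choose (j+1) : ℝ) * p.eval (((j+1:ℕ)):ℝ)
          = ∑ j ∈ Finset.range (n+1), g j - g 0 := by
        have e4 := Finset.sum_range_succ' g (n+1)
        have e5 : g (n+1) = 0 := by simp [hg, Nat.choose_succ_self]
        rw [Finset.sum_range_succ, e5, add_zero] at e4
        have : ∑ j ∈ Finset.range (n+1), g (j+1)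
            = ∑ j ∈ Finset.range (n+1), (-1:ℝ)^(j+1) * (n.choose (j+1) : ℝ) * p.eval (((j+1:ℕ)):ℝ) := by
          apply Finset.sum_congr rfl; intro j _; simp [hg]
        rw [this] at e4
        linarith [e4]
      rw [e3]
      have e6 : g 0 = (-1:ℝ)^(0:ℕ) * (((n+1).choose 0 : ℕ) : ℝ) * p.eval ((0:ℕ):ℝ) := by
        simp [hg]
      rw [← e6]
      have e7 : ∑ j ∈ Finset.range (n+1), (-1:ℝ)^j * (n.choose j : ℝ)
            * (p.eval (j:ℝ) - p.eval ((j:ℝ)+1))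
          = (∑ j ∈ Finset.range (n+1), g j)
            - ∑ j ∈ Finset.range (n+1), (-1:ℝ)^j * (n.choose j : ℝ) * p.eval ((j:ℝ)+1) := by
        rw [← Finset.sum_sub_distrib]
        apply Finset.sum_congr rfl; intro j _; simp only [hg]; ring
      rw [e7]
      ring
    rw [key]
    set Δ : Polynomial ℝ := p - Polynomial.taylor 1 p with hΔ
    have hev : ∀ j : ℕ, p.eval (j:ℝ) - p.eval ((j:ℝ)+1) = Δ.eval (j:ℝ) := by
      intro j; simp [hΔ, Polynomial.taylor_eval]
    have hdeg : Δ.natDegree ≤ n := by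
      rw [Polynomial.natDegree_le_iff_coeff_eq_zero]
      intro m hm
      rcases Nat.lt_or_ge (n+1) m with h | h
      · have h1 : p.coeff m = 0 := Polynomial.coeff_eq_zero_of_natDegree_lt (by omega)
        have h2 : (Polynomial.taylor 1 p).coeff m = 0 :=
          Polynomial.coeff_eq_zero_of_natDegree_lt (by rw [Polynomial.natDegree_taylor]; omega)
        simp [hΔ, h1, h2]
      · have hm1 : m = n + 1 := by omega
        subst hm1
        have := taylor_one_coeff_aux (n+1) p (by omega)
        have h0 : p.coeff (n+2) = 0 := Polynomial.coeff_eq_zero_of_natDegree_lt (by omega)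
        simp [hΔ, this, h0]
    have hsum : ∑ j ∈ Finset.range (n+1), (-1:ℝ)^j * (n.choose j : ℝ) * Δ.eval (j:ℝ)
        = (-1)^n * (Nat.factorial n) * Δ.coeff n := ih Δ hdeg
    have e7 : ∑ j ∈ Finset.range (n+1), (-1:ℝ)^j * (n.choose j : ℝ) * (p.eval (j:ℝ) - p.eval ((j:ℝ)+1))
        = ∑ j ∈ Finset.range (n+1), (-1:ℝ)^j * (n.choose j : ℝ) * Δ.eval (j:ℝ) := by
      apply Finset.sum_congr rfl; intro j _; rw [hev j]
    rw [e7, hsum]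
    have hc : Δ.coeff n = -((n:ℝ)+1) * p.coeff (n+1) := by
      have := taylor_one_coeff_aux n p hp
      simp [hΔ, this]; ring
    rw [hc, Nat.factorial_succ]
    push_cast
    ring

lemma baseIntegrable {a b : ℝ} (ha : -1 < a) (hb : -1 < b) :
    IntervalIntegrable (fun t => (1-t)^a * (1+t)^b) volume (-1) 1 := by
  have h1 : IntervalIntegrable (fun t : ℝ => (1-t)^a) volume 0 1 := by
    have := (intervalIntegral.intervalIntegrable_rpow' (a := 0) (b := 1) ha).comp_sub_left 1
    simpa using this.symm
  have h2 : IntervalIntegrable (fun t : ℝ => (1+t)^b) volume (-1) 0 := by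
    have := (intervalIntegral.intervalIntegrable_rpow' (a := 0) (b := 1) hb).comp_add_right 1
    simpa [add_comm] using this
  have c1 : ContinuousOn (fun t : ℝ => (1+t)^b) (Set.uIcc 0 1) := by
    apply ContinuousOn.rpow_const (by fun_prop)
    intro x hx
    rw [Set.uIcc_of_le (by norm_num)] at hx
    left; nlinarith [hx.1]
  have c2 : ContinuousOn (fun t : ℝ => (1-t)^a) (Set.uIcc (-1) 0) := by
    apply ContinuousOn.rpow_const (by fun_prop)
    intro x hx
    rw [Set.uIcc_of_le (by norm_num)] at hx
    left; nlinarith [hx.2]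
  have i1 : IntervalIntegrable (fun t => (1-t)^a * (1+t)^b) volume 0 1 :=
    h1.mul_continuousOn c1
  have i2 : IntervalIntegrable (fun t => (1-t)^a * (1+t)^b) volume (-1) 0 := by
    have hfun : (fun t : ℝ => (1-t)^a * (1+t)^b) = fun t => (1+t)^b * (1-t)^a := by
      funext t; ring
    rw [hfun]
    exact h2.mul_continuousOn c2
  exact i2.trans i1

lemma real_beta {a b : ℝ} (ha : -1 < a) (hb : -1 < b) :
    ∫ x in (0:ℝ)..1, x^b * (1-x)^a
      = Real.Gamma (b+1) * Real.Gamma (a+1) / Real.Gamma (a+b+2) := by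
  have hu : 0 < (Complex.ofReal (b+1)).re := by simpa using by linarith
  have hv : 0 < (Complex.ofReal (a+1)).re := by simpa using by linarith
  have key := Complex.Gamma_mul_Gamma_eq_betaIntegral hu hv
  have hbeta : Complex.betaIntegral (Complex.ofReal (b+1)) (Complex.ofReal (a+1))
      = Complex.ofReal (∫ x in (0:ℝ)..1, x^b * (1-x)^a) := by
    rw [Complex.betaIntegral, ← intervalIntegral.integral_ofReal]
    apply intervalIntegral.integral_congr
    intro x hx
    rw [Set.uIcc_of_le (by norm_num)] at hx
    have h0 : (0:ℝ) ≤ x := hx.1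
    have h1 : (0:ℝ) ≤ 1 - x := by linarith [hx.2]
    show (x:ℂ)^((Complex.ofReal (b+1)) - 1) * ((1:ℂ)-(x:ℂ))^((Complex.ofReal (a+1)) - 1)
        = Complex.ofReal (x^b*(1-x)^a)
    have e1 : (Complex.ofReal (b+1)) - 1 = Complex.ofReal b := by push_cast; ring
    have e2 : (Complex.ofReal (a+1)) - 1 = Complex.ofReal a := by push_cast; ring
    rw [e1, e2, ← Complex.ofReal_cpow h0, ← Complex.ofReal_one, ← Complex.ofReal_sub,
      ← Complex.ofReal_cpow h1, ← Complex.ofReal_mul]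
  rw [hbeta] at key
  have hG : Real.Gamma (a+b+2) ≠ 0 := (Real.Gamma_pos_of_pos (by linarith)).ne'
  have e3 : (Complex.ofReal (b+1)) + (Complex.ofReal (a+1)) = Complex.ofReal (a+b+2) := by
    push_cast; ring
  rw [e3, Complex.Gamma_ofReal, Complex.Gamma_ofReal, Complex.Gamma_ofReal,
    ← Complex.ofReal_mul, ← Complex.ofReal_mul] at key
  have key2 : Real.Gamma (b+1) * Real.Gamma (a+1)
      = Real.Gamma (a+b+2) * ∫ x in (0:ℝ)..1, x^b * (1-x)^a := Complex.ofReal_inj.mp key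
  field_simp
  linarith [key2]

lemma J_eq {a b : ℝ} (ha : -1 < a) (hb : -1 < b) :
    ∫ t in (-1:ℝ)..1, (1-t)^a * (1+t)^b
      = (2:ℝ)^(a+b+1) * (Real.Gamma (b+1) * Real.Gamma (a+1) / Real.Gamma (a+b+2)) := by
  have sub := intervalIntegral.integral_comp_mul_add
    (f := fun t => (1-t)^a * (1+t)^b) (a := (0:ℝ)) (b := 1) (c := 2) (two_ne_zero) (-1)
  norm_num at sub
  -- sub : ∫ x in 0..1, (1 - (2x-1))^a * (1 + (2x-1))^b = 2⁻¹ * ∫ t in -1..1, ...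
  have congr1 : ∫ x in (0:ℝ)..1, (1-(2*x + -1))^a * (2*x)^b
      = ∫ x in (0:ℝ)..1, (2:ℝ)^a * (2:ℝ)^b * (x^b * (1-x)^a) := by
    apply intervalIntegral.integral_congr
    intro x hx
    rw [Set.uIcc_of_le (by norm_num)] at hx
    have h0 : (0:ℝ) ≤ x := hx.1
    have h1 : (0:ℝ) ≤ 1 - x := by linarith [hx.2]
    show (1-(2*x + -1))^a * (2*x)^b = (2:ℝ)^a * (2:ℝ)^b * (x^b * (1-x)^a)
    have e1 : 1-(2*x + -1) = 2 * (1-x) := by ring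
    rw [e1, Real.mul_rpow (by norm_num) h1, Real.mul_rpow (by norm_num) h0]
    ring
  rw [congr1, intervalIntegral.integral_const_mul, real_beta ha hb] at sub
  have e4 : (2:ℝ)^(a+b+1) = 2^a * 2^b * 2 := by
    rw [Real.rpow_add (by norm_num), Real.rpow_add (by norm_num), Real.rpow_one]
  rw [e4]
  linarith [sub]


lemma prodA_split (x : ℝ) (p q : ℕ) :
    (∏ i ∈ Finset.range p, (x + i)) * (∏ i ∈ Finset.range q, (x + p + i))
      = ∏ i ∈ Finset.range (p+q), (x + i) := by
  rw [Finset.prod_range_add]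
  congr 1
  apply Finset.prod_congr rfl
  intro i _
  push_cast; ring

lemma prod_reflect (y : ℝ) (m : ℕ) :
    ∏ i ∈ Finset.range m, (y - i) = ∏ i ∈ Finset.range m, (y - m + 1 + i) := by
  rw [← Finset.prod_range_reflect]
  apply Finset.prod_congr rfl
  intro i hi
  have him : i < m := Finset.mem_range.mp hi
  have h1 : ((m - 1 - i : ℕ) : ℝ) = (m:ℝ) - 1 - i := by
    have : m - 1 - i = m - (1 + i) := by omega
    rw [this, Nat.cast_sub (by omega)]
    push_cast; ring
  rw [h1]; ring

lemma Gamma_shift (x : ℝ) (hx : 0 < x) (j : ℕ) :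
    Real.Gamma (x + j) = Real.Gamma x * ∏ i ∈ Finset.range j, (x + i) := by
  induction j with
  | zero => simp
  | succ j ih =>
    have hxj : x + (j:ℝ) ≠ 0 := by positivity
    have e : x + ((j+1 : ℕ):ℝ) = (x + j) + 1 := by push_cast; ring
    rw [e, Real.Gamma_add_one hxj, ih, Finset.prod_range_succ]
    ring

lemma gbinom_a (n j : ℕ) (α : ℝ) (hj : j ≤ n) :
    (∏ i ∈ Finset.range j, (α + 1 + i)) * (∏ i ∈ Finset.range (n-j), ((n:ℝ) + α - i))
      = ∏ i ∈ Finset.range n, (α + 1 + i) := by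
  have e1 : ∏ i ∈ Finset.range (n-j), ((n:ℝ) + α - i)
      = ∏ i ∈ Finset.range (n-j), ((α + 1) + j + i) := by
    rw [prod_reflect]
    apply Finset.prod_congr rfl
    intro i _
    rw [Nat.cast_sub hj]
    ring
  rw [e1, prodA_split (α+1) j (n-j), show j + (n-j) = n by omega]

lemma gbinom_b (n j : ℕ) (β : ℝ) (hj : j ≤ n) :
    (∏ i ∈ Finset.range (n-j), (β + 1 + i)) * (∏ i ∈ Finset.range j, ((n:ℝ) + β - i))
      = ∏ i ∈ Finset.range n, (β + 1 + i) := by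
  have e1 : ∏ i ∈ Finset.range j, ((n:ℝ) + β - i)
      = ∏ i ∈ Finset.range j, ((β + 1) + (n-j:ℕ) + i) := by
    rw [prod_reflect]
    apply Finset.prod_congr rfl
    intro i _
    rw [Nat.cast_sub hj]
    ring
  rw [e1, prodA_split (β+1) (n-j) j, show (n-j) + j = n by omega]

set_option maxHeartbeats 1000000 in
lemma term_eq (n k c j : ℕ) (α β : ℝ) (hβ : -1 < β) (hak : -1 < α + k)
    (hα : ∀ m : ℤ, α ≠ m) (hj : j ≤ n) :
    gbinomR ((n:ℝ)+α) (n-j) * gbinomR ((n:ℝ)+β) j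
      * (Real.Gamma (β + c + ((n-j:ℕ):ℝ) + 1) * Real.Gamma ((α + k) + j + 1))
    = (Real.Gamma (β+(c:ℝ)+1) * Real.Gamma (α+k+1)
        * (∏ i ∈ Finset.range n, (α+1+i)) * (∏ i ∈ Finset.range n, (β+1+i))
        / ((∏ i ∈ Finset.range k, (α+1+i)) * (∏ i ∈ Finset.range c, (β+1+i))
            * (Nat.factorial n : ℝ)))
      * (n.choose j)
      * ((∏ i ∈ Finset.range k, (α + 1 + j + i))
          * (∏ i ∈ Finset.range c, (β + 1 + (n:ℝ) + i - j))) := by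
  have hαm : ∀ m : ℕ, α + 1 + (m:ℝ) ≠ 0 := by
    intro m hcon
    exact hα (-(1+m)) (by push_cast; linarith)
  have hPa : ∀ r : ℕ, (∏ i ∈ Finset.range r, (α+1+(i:ℝ))) ≠ 0 := by
    intro r
    exact Finset.prod_ne_zero_iff.mpr (fun i _ => hαm i)
  have hPb : ∀ r : ℕ, (0:ℝ) < ∏ i ∈ Finset.range r, (β+1+(i:ℝ)) := by
    intro r
    apply Finset.prod_pos
    intro i _
    have : (0:ℝ) ≤ i := Nat.cast_nonneg i
    linarith
  have hfac : ∀ m : ℕ, ((Nat.factorial m : ℕ) : ℝ) ≠ 0 := by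
    intro m; exact_mod_cast (Nat.factorial_pos m).ne'
  -- E1
  have E1 : gbinomR ((n:ℝ)+α) (n-j)
      = (∏ i ∈ Finset.range n, (α+1+i))
        / ((∏ i ∈ Finset.range j, (α+1+i)) * (Nat.factorial (n-j) : ℝ)) := by
    rw [gbinomR, div_eq_div_iff (hfac _) (mul_ne_zero (hPa j) (hfac _)), ← gbinom_a n j α hj]
    ring
  have E2 : gbinomR ((n:ℝ)+β) j
      = (∏ i ∈ Finset.range n, (β+1+i))
        / ((∏ i ∈ Finset.range (n-j), (β+1+i)) * (Nat.factorial j : ℝ)) := by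
    rw [gbinomR, div_eq_div_iff (hfac _) (mul_ne_zero (hPb (n-j)).ne' (hfac _)),
      ← gbinom_b n j β hj]
    ring
  -- Gamma shifts
  have hG1 : Real.Gamma ((α + k) + j + 1)
      = Real.Gamma (α+k+1) * ((∏ i ∈ Finset.range j, (α+1+i))
          * (∏ i ∈ Finset.range k, (α + 1 + j + i)))
        / (∏ i ∈ Finset.range k, (α+1+i)) := by
    have h1 : Real.Gamma ((α+k+1) + (j:ℝ)) = Real.Gamma (α+k+1)
        * ∏ i ∈ Finset.range j, ((α+k+1) + i) := Gamma_shift _ (by linarith) j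
    have h2 : (∏ i ∈ Finset.range k, (α+1+(i:ℝ))) * ∏ i ∈ Finset.range j, ((α+k+1) + (i:ℝ))
        = ∏ i ∈ Finset.range (k+j), (α+1+(i:ℝ)) := by
      rw [← prodA_split (α+1) k j]
      congr 1
      apply Finset.prod_congr rfl; intro i _; ring
    have h3 : (∏ i ∈ Finset.range j, (α+1+(i:ℝ)))
        * ∏ i ∈ Finset.range k, (α + 1 + (j:ℝ) + i)
        = ∏ i ∈ Finset.range (k+j), (α+1+(i:ℝ)) := by
      rw [show k + j = j + k by omega, ← prodA_split (α+1) j k]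
    rw [show (α + (k:ℝ)) + j + 1 = (α+k+1) + (j:ℝ) by ring, h1]
    rw [eq_div_iff (hPa k)]
    rw [mul_assoc, h3, ← h2]
    ring
  have hG2 : Real.Gamma (β + c + ((n-j:ℕ):ℝ) + 1)
      = Real.Gamma (β+(c:ℝ)+1) * ((∏ i ∈ Finset.range (n-j), (β+1+i))
          * (∏ i ∈ Finset.range c, (β + 1 + (n:ℝ) + i - j)))
        / (∏ i ∈ Finset.range c, (β+1+i)) := by
    have h1 : Real.Gamma ((β+c+1) + ((n-j:ℕ)):ℝ) = Real.Gamma (β+(c:ℝ)+1)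
        * ∏ i ∈ Finset.range (n-j), ((β+(c:ℝ)+1) + i) := by
      have hc0 : (0:ℝ) ≤ (c:ℝ) := Nat.cast_nonneg c
      exact Gamma_shift _ (by linarith) (n-j)
    have h2 : (∏ i ∈ Finset.range c, (β+1+(i:ℝ))) * ∏ i ∈ Finset.range (n-j), ((β+(c:ℝ)+1) + i)
        = ∏ i ∈ Finset.range (c+(n-j)), (β+1+(i:ℝ)) := by
      rw [← prodA_split (β+1) c (n-j)]
      congr 1
      apply Finset.prod_congr rfl; intro i _; ring
    have h3 : (∏ i ∈ Finset.range (n-j), (β+1+(i:ℝ)))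
        * ∏ i ∈ Finset.range c, (β + 1 + (n:ℝ) + i - j)
        = ∏ i ∈ Finset.range (c+(n-j)), (β+1+(i:ℝ)) := by
      rw [show c + (n-j) = (n-j) + c by omega, ← prodA_split (β+1) (n-j) c]
      congr 1
      apply Finset.prod_congr rfl; intro i _
      rw [Nat.cast_sub hj]
      ring
    rw [show β + (c:ℝ) + ((n-j:ℕ):ℝ) + 1 = (β+(c:ℝ)+1) + ((n-j:ℕ):ℝ) by ring, h1]
    rw [eq_div_iff (hPb c).ne']
    rw [mul_assoc, h3, ← h2]
    ring
  have hch : (n.choose j : ℝ) = (Nat.factorial n : ℝ)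
      / ((Nat.factorial j : ℝ) * (Nat.factorial (n-j) : ℝ)) := Nat.cast_choose ℝ hj
  rw [E1, E2, hG1, hG2, hch]
  rw [div_mul_div_comm, div_mul_div_comm, div_mul_div_comm, div_mul_div_comm,
    div_mul_eq_mul_div, div_eq_div_iff]
  · ring
  · repeat' apply mul_ne_zero
    all_goals first | exact hPa _ | exact hfac _ | exact (hPb _).ne'
  · repeat' apply mul_ne_zero
    all_goals first | exact hPa _ | exact hfac _ | exact (hPb _).ne'

lemma gc_eval (n k c : ℕ) (α β : ℝ) (j : ℝ) :
    (((∏ i ∈ Finset.range k, (Polynomial.X + Polynomial.C (α+1+i))) *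
      (∏ i ∈ Finset.range c, (Polynomial.C (β+1+(n:ℝ)+i) - Polynomial.X))).eval j)
    = (∏ i ∈ Finset.range k, (α + 1 + j + i)) * (∏ i ∈ Finset.range c, (β + 1 + (n:ℝ) + i - j)) := by
  simp only [Polynomial.eval_mul, Polynomial.eval_prod, Polynomial.eval_add,
    Polynomial.eval_sub, Polynomial.eval_X, Polynomial.eval_C]
  congr 1
  apply Finset.prod_congr rfl; intro i _; ring

lemma gc_natDegree_le (n k c : ℕ) (α β : ℝ) :
    (((∏ i ∈ Finset.range k, (Polynomial.X + Polynomial.C (α+1+i))) *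
      (∏ i ∈ Finset.range c, (Polynomial.C (β+1+(n:ℝ)+i) - Polynomial.X)))).natDegree ≤ k + c := by
  apply le_trans (Polynomial.natDegree_mul_le)
  have h1 : (∏ i ∈ Finset.range k, (Polynomial.X + Polynomial.C (α+1+(i:ℝ)))).natDegree ≤ k := by
    apply le_trans (Polynomial.natDegree_prod_le _ _)
    apply le_trans (Finset.sum_le_card_nsmul _ _ 1 ?_) (by simp)
    intro i _
    exact le_of_eq (Polynomial.natDegree_X_add_C _)
  have h2 : (∏ i ∈ Finset.range c, (Polynomial.C (β+1+(n:ℝ)+(i:ℝ)) - Polynomial.X)).natDegree ≤ c := by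
    apply le_trans (Polynomial.natDegree_prod_le _ _)
    apply le_trans (Finset.sum_le_card_nsmul _ _ 1 ?_) (by simp)
    intro i _
    apply le_of_eq
    rw [show Polynomial.C (β+1+(n:ℝ)+(i:ℝ)) - Polynomial.X
        = -(Polynomial.X - Polynomial.C (β+1+(n:ℝ)+(i:ℝ))) by ring, Polynomial.natDegree_neg,
      Polynomial.natDegree_X_sub_C]
  omega

lemma gc_coeff_top (n k c : ℕ) (α β : ℝ) (h : k + c = n) :
    (((∏ i ∈ Finset.range k, (Polynomial.X + Polynomial.C (α+1+i))) *
      (∏ i ∈ Finset.range c, (Polynomial.C (β+1+(n:ℝ)+i) - Polynomial.X)))).coeff n = (-1:ℝ)^c := by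
  have hv : (∏ i ∈ Finset.range c, (Polynomial.C (β+1+(n:ℝ)+(i:ℝ)) - Polynomial.X))
      = Polynomial.C ((-1:ℝ)^c) * ∏ i ∈ Finset.range c, (Polynomial.X - Polynomial.C (β+1+(n:ℝ)+(i:ℝ))) := by
    rw [show Polynomial.C ((-1:ℝ)^c) = ∏ _i ∈ Finset.range c, (Polynomial.C (-1:ℝ)) by
        rw [Finset.prod_const, Finset.card_range, ← Polynomial.C_pow],
      ← Finset.prod_mul_distrib]
    apply Finset.prod_congr rfl; intro i _
    simp only [map_neg, map_one]
    ring
  have hu : (∏ i ∈ Finset.range k, (Polynomial.X + Polynomial.C (α+1+(i:ℝ)))).Monic := by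
    apply Polynomial.monic_prod_of_monic
    intro i _
    simpa [add_comm] using Polynomial.monic_X_add_C (α+1+(i:ℝ))
  have hw : (∏ i ∈ Finset.range c, (Polynomial.X - Polynomial.C (β+1+(n:ℝ)+(i:ℝ)))).Monic := by
    apply Polynomial.monic_prod_of_monic
    intro i _
    exact Polynomial.monic_X_sub_C _
  have hdu : (∏ i ∈ Finset.range k, (Polynomial.X + Polynomial.C (α+1+(i:ℝ)))).natDegree = k := by
    rw [Polynomial.natDegree_prod_of_monic]
    · simp only [Polynomial.natDegree_X_add_C]; simp
    · intro i _
      simpa [add_comm] using Polynomial.monic_X_add_C (α+1+(i:ℝ))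
  have hdw : (∏ i ∈ Finset.range c, (Polynomial.X - Polynomial.C (β+1+(n:ℝ)+(i:ℝ)))).natDegree = c := by
    rw [Polynomial.natDegree_prod_of_monic]
    · simp only [Polynomial.natDegree_X_sub_C]; simp
    · intro i _
      exact Polynomial.monic_X_sub_C _
  rw [hv, show (∏ i ∈ Finset.range k, (Polynomial.X + Polynomial.C (α+1+(i:ℝ)))) *
      (Polynomial.C ((-1:ℝ)^c) * ∏ i ∈ Finset.range c, (Polynomial.X - Polynomial.C (β+1+(n:ℝ)+(i:ℝ))))
      = Polynomial.C ((-1:ℝ)^c) * ((∏ i ∈ Finset.range k, (Polynomial.X + Polynomial.C (α+1+(i:ℝ)))) *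
        ∏ i ∈ Finset.range c, (Polynomial.X - Polynomial.C (β+1+(n:ℝ)+(i:ℝ)))) by ring,
    Polynomial.coeff_C_mul]
  have hcoe : ((∏ i ∈ Finset.range k, (Polynomial.X + Polynomial.C (α+1+(i:ℝ)))) *
      ∏ i ∈ Finset.range c, (Polynomial.X - Polynomial.C (β+1+(n:ℝ)+(i:ℝ)))).coeff n = 1 := by
    have hd : ((∏ i ∈ Finset.range k, (Polynomial.X + Polynomial.C (α+1+(i:ℝ)))) *
        ∏ i ∈ Finset.range c, (Polynomial.X - Polynomial.C (β+1+(n:ℝ)+(i:ℝ)))).natDegree = n := by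
      rw [hu.natDegree_mul hw, hdu, hdw, h]
    have hc2 := (hu.mul hw).coeff_natDegree
    rwa [hd] at hc2
  rw [hcoe, mul_one]
set_option maxHeartbeats 1000000 in
lemma coreA (n k c : ℕ) (α β : ℝ) (hβ : -1 < β) (hak : -1 < α + k) (hak0 : α + k < 0)
    (hα : ∀ m : ℤ, α ≠ m) (hkc : k + c ≤ n) :
    ∃ E : ℝ, E ≠ 0 ∧
      (∫ t in (-1:ℝ)..1, (t+1)^c * (jacobiR n α β).eval t * (1-t)^(α+(k:ℝ)) * (1+t)^β)
      = E * (((∏ i ∈ Finset.range k, (Polynomial.X + Polynomial.C (α+1+i))) *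
          (∏ i ∈ Finset.range c, (Polynomial.C (β+1+(n:ℝ)+i) - Polynomial.X))).coeff n) := by
  have hαm : ∀ m : ℕ, α + 1 + (m:ℝ) ≠ 0 := by
    intro m hcon
    exact hα (-(1+m)) (by push_cast; linarith)
  have hPa : ∀ r : ℕ, (∏ i ∈ Finset.range r, (α+1+(i:ℝ))) ≠ 0 := by
    intro r
    exact Finset.prod_ne_zero_iff.mpr (fun i _ => hαm i)
  have hPb : ∀ r : ℕ, (0:ℝ) < ∏ i ∈ Finset.range r, (β+1+(i:ℝ)) := by
    intro r
    apply Finset.prod_pos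
    intro i _
    have : (0:ℝ) ≤ i := Nat.cast_nonneg i
    linarith
  set K : ℕ → ℝ := fun j => (2:ℝ)⁻¹^n * (gbinomR ((n:ℝ)+α) (n-j) * gbinomR ((n:ℝ)+β) j) * (-1)^j
    with hK
  set F : ℕ → ℝ → ℝ := fun j t =>
    K j * ((1-t)^(α+(k:ℝ)+(j:ℝ)) * (1+t)^(β+(c:ℝ)+((n-j:ℕ):ℝ))) with hF
  have hexp1 : ∀ j : ℕ, (-1:ℝ) < α+(k:ℝ)+(j:ℝ) := by
    intro j
    have : (0:ℝ) ≤ j := Nat.cast_nonneg j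
    linarith
  have hexp2 : ∀ j : ℕ, (-1:ℝ) < β+(c:ℝ)+((n-j:ℕ):ℝ) := by
    intro j
    have h1 : (0:ℝ) ≤ c := Nat.cast_nonneg c
    have h2 : (0:ℝ) ≤ ((n-j:ℕ):ℝ) := Nat.cast_nonneg _
    linarith
  have hint : ∀ j ∈ Finset.range (n+1), IntervalIntegrable (F j) volume (-1) 1 := by
    intro j _
    exact (baseIntegrable (hexp1 j) (hexp2 j)).const_mul (K j)
  -- pointwise equality on Ioo
  have heq : ∀ t ∈ Ioo (-1:ℝ) 1,
      (t+1)^c * (jacobiR n α β).eval t * (1-t)^(α+(k:ℝ)) * (1+t)^β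
        = ∑ j ∈ Finset.range (n+1), F j t := by
    intro t ht
    have h1t : (0:ℝ) < 1 - t := by linarith [ht.2]
    have h2t : (0:ℝ) < 1 + t := by linarith [ht.1]
    have evalP : (jacobiR n α β).eval t = (2:ℝ)⁻¹^n
        * ∑ j ∈ Finset.range (n+1),
            gbinomR ((n:ℝ)+α) (n-j) * gbinomR ((n:ℝ)+β) j * (t-1)^j * (t+1)^(n-j) := by
      simp only [jacobiR, Polynomial.eval_smul, smul_eq_mul, Polynomial.eval_finset_sum,
        Polynomial.eval_mul, Polynomial.eval_pow, Polynomial.eval_sub, Polynomial.eval_add,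
        Polynomial.eval_one, Polynomial.eval_C, Polynomial.eval_X]
    rw [evalP]
    rw [show (t+1)^c * ((2:ℝ)⁻¹^n * ∑ j ∈ Finset.range (n+1),
          gbinomR ((n:ℝ)+α) (n-j) * gbinomR ((n:ℝ)+β) j * (t-1)^j * (t+1)^(n-j))
        * (1-t)^(α+(k:ℝ)) * (1+t)^β
        = ∑ j ∈ Finset.range (n+1), ((t+1)^c * (2:ℝ)⁻¹^n * (1-t)^(α+(k:ℝ)) * (1+t)^β)
            * (gbinomR ((n:ℝ)+α) (n-j) * gbinomR ((n:ℝ)+β) j * (t-1)^j * (t+1)^(n-j)) by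
      rw [← Finset.mul_sum]; ring]
    apply Finset.sum_congr rfl
    intro j _
    have e1 : (1-t)^(α+(k:ℝ)+(j:ℝ)) = (1-t)^(α+(k:ℝ)) * (1-t)^j := by
      rw [Real.rpow_add h1t, Real.rpow_natCast]
    have e2 : (1+t)^(β+(c:ℝ)+((n-j:ℕ):ℝ)) = (1+t)^β * ((1+t)^c * (1+t)^(n-j)) := by
      rw [show β+(c:ℝ)+((n-j:ℕ):ℝ) = β+((c:ℝ)+((n-j:ℕ):ℝ)) by ring, Real.rpow_add h2t,
        Real.rpow_add h2t, Real.rpow_natCast, Real.rpow_natCast]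
    have e3 : (t-1)^j = (-1:ℝ)^j * (1-t)^j := by
      rw [show t-1 = -(1-t) by ring, neg_pow]
    rw [hF, hK]
    simp only []
    rw [e1, e2, e3]
    ring
  -- turn the integral into a sum
  have hI1 : (∫ t in (-1:ℝ)..1, (t+1)^c * (jacobiR n α β).eval t * (1-t)^(α+(k:ℝ)) * (1+t)^β)
      = ∫ t in (-1:ℝ)..1, ∑ j ∈ Finset.range (n+1), F j t := by
    rw [intervalIntegral.integral_of_le (by norm_num), intervalIntegral.integral_of_le (by norm_num),
      MeasureTheory.integral_Ioc_eq_integral_Ioo, MeasureTheory.integral_Ioc_eq_integral_Ioo]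
    exact MeasureTheory.setIntegral_congr_fun measurableSet_Ioo heq
  rw [hI1, intervalIntegral.integral_finset_sum hint]
  have hI2 : ∀ j, (∫ t in (-1:ℝ)..1, F j t)
      = K j * ((2:ℝ)^((α+(k:ℝ)+(j:ℝ))+(β+(c:ℝ)+((n-j:ℕ):ℝ))+1)
          * (Real.Gamma ((β+(c:ℝ)+((n-j:ℕ):ℝ))+1) * Real.Gamma ((α+(k:ℝ)+(j:ℝ))+1)
            / Real.Gamma ((α+(k:ℝ)+(j:ℝ))+(β+(c:ℝ)+((n-j:ℕ):ℝ))+2))) := by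
    intro j
    rw [hF]
    simp only []
    rw [intervalIntegral.integral_const_mul, J_eq (hexp1 j) (hexp2 j)]
  set Pan := ∏ i ∈ Finset.range n, (α+1+(i:ℝ)) with hPan
  set Pbn := ∏ i ∈ Finset.range n, (β+1+(i:ℝ)) with hPbn
  set Pak := ∏ i ∈ Finset.range k, (α+1+(i:ℝ)) with hPak
  set Pbc := ∏ i ∈ Finset.range c, (β+1+(i:ℝ)) with hPbc
  set K' : ℝ := Real.Gamma (β+(c:ℝ)+1) * Real.Gamma (α+(k:ℝ)+1) * Pan * Pbn
      / (Pak * Pbc * (Nat.factorial n : ℝ)) with hK'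
  set D : ℝ := (2:ℝ)⁻¹^n * ((2:ℝ)^(α+(k:ℝ)+β+(c:ℝ)+(n:ℝ)+1)
      / Real.Gamma (α+(k:ℝ)+β+(c:ℝ)+(n:ℝ)+2)) * K' with hD
  set gc : Polynomial ℝ := (∏ i ∈ Finset.range k, (Polynomial.X + Polynomial.C (α+1+i))) *
      (∏ i ∈ Finset.range c, (Polynomial.C (β+1+(n:ℝ)+i) - Polynomial.X)) with hgc
  have hsum2 : ∑ j ∈ Finset.range (n+1), (∫ t in (-1:ℝ)..1, F j t)
      = D * ∑ j ∈ Finset.range (n+1), (-1:ℝ)^j * (n.choose j : ℝ) * gc.eval (j:ℝ) := by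
    rw [Finset.mul_sum]
    apply Finset.sum_congr rfl
    intro j hj
    have hjn : j ≤ n := by
      have := Finset.mem_range.mp hj; omega
    have hcast : ((n-j:ℕ):ℝ) = (n:ℝ) - j := Nat.cast_sub hjn
    have hS : (α+(k:ℝ)+(j:ℝ))+(β+(c:ℝ)+((n-j:ℕ):ℝ))+1 = α+(k:ℝ)+β+(c:ℝ)+(n:ℝ)+1 := by
      rw [hcast]; ring
    have hT : (α+(k:ℝ)+(j:ℝ))+(β+(c:ℝ)+((n-j:ℕ):ℝ))+2 = α+(k:ℝ)+β+(c:ℝ)+(n:ℝ)+2 := by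
      rw [hcast]; ring
    rw [hI2 j, hS, hT]
    have ht := term_eq n k c j α β hβ hak hα hjn
    have hg := gc_eval n k c α β (j:ℝ)
    rw [hK]
    simp only []
    rw [hD, hK', hgc, hg, hPan, hPbn, hPak, hPbc]
    have hT2 : (α + (k:ℝ)) + (j:ℝ) + 1 = α + (k:ℝ) + (j:ℝ) + 1 := rfl
    linear_combination ((2:ℝ)⁻¹^n * (-1:ℝ)^j * ((2:ℝ)^(α+(k:ℝ)+β+(c:ℝ)+(n:ℝ)+1)
      / Real.Gamma (α+(k:ℝ)+β+(c:ℝ)+(n:ℝ)+2))) * ht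
  rw [hsum2, fd_sum n gc (le_trans (gc_natDegree_le n k c α β) hkc)]
  refine ⟨D * ((-1:ℝ)^n * (Nat.factorial n : ℝ)), ?_, by rw [hgc]; ring⟩
  have hapos : (0:ℝ) < α + (k:ℝ) + 1 := by linarith
  have hbpos : (0:ℝ) < β + (c:ℝ) + 1 := by
    have : (0:ℝ) ≤ (c:ℝ) := Nat.cast_nonneg c
    linarith
  have hTpos : (0:ℝ) < α+(k:ℝ)+β+(c:ℝ)+(n:ℝ)+2 := by
    have h1 : (0:ℝ) ≤ (c:ℝ) := Nat.cast_nonneg c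
    have h2 : (0:ℝ) ≤ (n:ℝ) := Nat.cast_nonneg n
    linarith
  have hfacne : ((Nat.factorial n : ℕ) : ℝ) ≠ 0 := by
    exact_mod_cast (Nat.factorial_pos n).ne'
  apply mul_ne_zero
  · rw [hD]
    apply mul_ne_zero (mul_ne_zero (pow_ne_zero _ (by norm_num)) ?_) ?_
    · exact div_ne_zero (Real.rpow_pos_of_pos (by norm_num) _).ne'
        (Real.Gamma_pos_of_pos hTpos).ne'
    · rw [hK']
      apply div_ne_zero
      · exact mul_ne_zero (mul_ne_zero (mul_ne_zero (Real.Gamma_pos_of_pos hbpos).ne'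
          (Real.Gamma_pos_of_pos hapos).ne') (hPa n)) (hPb n).ne'
      · exact mul_ne_zero (mul_ne_zero (hPa k) (hPb c).ne') hfacne
  · exact mul_ne_zero (pow_ne_zero _ (by norm_num)) hfacne

lemma coreZero (n k c : ℕ) (α β : ℝ) (hβ : -1 < β) (hak : -1 < α + k) (hak0 : α + k < 0)
    (hα : ∀ m : ℤ, α ≠ m) (hkc : k + c < n) :
    (∫ t in (-1:ℝ)..1, (t+1)^c * (jacobiR n α β).eval t * (1-t)^(α+(k:ℝ)) * (1+t)^β) = 0 := by
  obtain ⟨E, _, heq⟩ := coreA n k c α β hβ hak hak0 hα (le_of_lt hkc)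
  rw [heq, Polynomial.coeff_eq_zero_of_natDegree_lt
    (lt_of_le_of_lt (gc_natDegree_le n k c α β) hkc), mul_zero]

lemma coreNe (n k c : ℕ) (α β : ℝ) (hβ : -1 < β) (hak : -1 < α + k) (hak0 : α + k < 0)
    (hα : ∀ m : ℤ, α ≠ m) (hkc : k + c = n) :
    (∫ t in (-1:ℝ)..1, (t+1)^c * (jacobiR n α β).eval t * (1-t)^(α+(k:ℝ)) * (1+t)^β) ≠ 0 := by
  obtain ⟨E, hE, heq⟩ := coreA n k c α β hβ hak hak0 hα (le_of_eq hkc)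
  rw [heq, gc_coeff_top n k c α β hkc]
  exact mul_ne_zero hE (pow_ne_zero _ (by norm_num))

lemma integrandInt (r : Polynomial ℝ) {A B : ℝ} (hA : -1 < A) (hB : -1 < B) :
    IntervalIntegrable (fun t => r.eval t * (1-t)^A * (1+t)^B) volume (-1) 1 := by
  have hfun : (fun t : ℝ => r.eval t * (1-t)^A * (1+t)^B)
      = fun t => ((1-t)^A * (1+t)^B) * r.eval t := by funext t; ring
  rw [hfun]
  exact (baseIntegrable hA hB).mul_continuousOn (r.continuous.continuousOn)


/-- Quasi-orthogonality on `[-1,1]`: for `β > -1`, `-n < α < -1`, `α ∉ ℤ`, `k = ⌊-α⌋`,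
the polynomial `P_n^{(α,β)}` is orthogonal to all polynomials of degree `≤ n-k-1` with
respect to the modified weight `(1-t)^{α+k} (1+t)^β`, and not orthogonal to `t^{n-k}`. -/
theorem jacobi_quasiorthogonality (n k : ℕ) (α β : ℝ) (hβ : -1 < β)
    (hα1 : -(n : ℝ) < α) (hα2 : α < -1) (hαZ : ¬∃ m : ℤ, α = m)
    (hk : (k : ℤ) = ⌊-α⌋) :
    (∀ q : Polynomial ℝ, q.degree < (n - k : ℕ) →
      (∫ t in (-1:ℝ)..1,
        q.eval t * (jacobiR n α β).eval t * (1 - t) ^ (α + k) * (1 + t) ^ β) = 0) ∧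
    (∫ t in (-1:ℝ)..1,
        t ^ (n - k) * (jacobiR n α β).eval t * (1 - t) ^ (α + k) * (1 + t) ^ β) ≠ 0 := by

  have hine : ∀ m : ℤ, α ≠ (m:ℝ) := fun m h => hαZ ⟨m, h⟩
  have hfl1 : ((k:ℤ):ℝ) ≤ -α := by rw [hk]; exact Int.floor_le (-α)
  have hfl2 : -α < ((k:ℤ):ℝ) + 1 := by rw [hk]; exact Int.lt_floor_add_one (-α)
  push_cast at hfl1 hfl2
  have hak : -1 < α + (k:ℝ) := by linarith
  have hak0 : α + (k:ℝ) < 0 := by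
    have hne : α ≠ -(k:ℝ) := by
      intro hcon
      exact hine (-(k:ℤ)) (by push_cast; linarith)
    rcases lt_or_eq_of_le (by linarith : α ≤ -(k:ℝ)) with h | h
    · linarith
    · exact absurd h hne
  have hkn : k < n := by
    have : ((k:ℤ):ℝ) < (n:ℝ) := by push_cast; linarith
    exact_mod_cast this
  constructor
  · -- orthogonality part
    intro q hq
    by_cases hq0 : q = 0
    · simp [hq0]
    have hnd : q.natDegree < n - k := by
      have := (Polynomial.natDegree_lt_iff_degree_lt (n := n - k) hq0).mpr hq
      exact this
    have hrep : ∀ t : ℝ, q.eval t = ∑ i ∈ Finset.range (q.natDegree+1),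
        (Polynomial.taylor (-1) q).coeff i * (t+1)^i := by
      intro t
      conv_lhs => rw [← Polynomial.sum_taylor_eq q (-1)]
      rw [Polynomial.sum_over_range' _ (fun i => by simp) (q.natDegree+1)
        (by rw [Polynomial.natDegree_taylor]; omega)]
      rw [Polynomial.eval_finset_sum]
      apply Finset.sum_congr rfl
      intro i _
      simp [sub_neg_eq_add]
    have hfun : (fun t => q.eval t * (jacobiR n α β).eval t * (1 - t) ^ (α + (k:ℝ)) * (1 + t) ^ β)
        = fun t => ∑ i ∈ Finset.range (q.natDegree+1),
            ((Polynomial.taylor (-1) q).coeff i)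
              * ((t+1)^i * (jacobiR n α β).eval t * (1 - t) ^ (α + (k:ℝ)) * (1 + t) ^ β) := by
      funext t
      rw [hrep t, Finset.sum_mul, Finset.sum_mul, Finset.sum_mul]
      apply Finset.sum_congr rfl
      intro i _
      ring
    rw [hfun, intervalIntegral.integral_finset_sum ?hints]
    case hints =>
      intro i _
      have hfe : (fun t : ℝ => ((Polynomial.taylor (-1) q).coeff i)
            * ((t+1)^i * (jacobiR n α β).eval t * (1 - t) ^ (α + (k:ℝ)) * (1 + t) ^ β))
          = fun t => (Polynomial.C ((Polynomial.taylor (-1) q).coeff i)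
              * (Polynomial.X + 1)^i * jacobiR n α β).eval t * (1-t)^(α+(k:ℝ)) * (1+t)^β := by
        funext t
        simp only [Polynomial.eval_mul, Polynomial.eval_pow, Polynomial.eval_add,
          Polynomial.eval_one, Polynomial.eval_C, Polynomial.eval_X]
        ring
      rw [hfe]
      exact integrandInt _ hak hβ
    apply Finset.sum_eq_zero
    intro i hi
    rw [intervalIntegral.integral_const_mul,
      coreZero n k i α β hβ hak hak0 hine (by
        have := Finset.mem_range.mp hi
        omega), mul_zero]
  · -- non-orthogonality part
    have hpow : (fun t : ℝ => t ^ (n-k) * (jacobiR n α β).eval t * (1 - t) ^ (α + (k:ℝ)) * (1 + t) ^ β)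
        = fun t => ∑ i ∈ Finset.range (n-k+1),
            ((-1:ℝ)^(n-k-i) * ((n-k).choose i : ℝ))
              * ((t+1)^i * (jacobiR n α β).eval t * (1 - t) ^ (α + (k:ℝ)) * (1 + t) ^ β) := by
      funext t
      have h := add_pow (t+1) (-1:ℝ) (n-k)
      rw [show t+1+(-1) = t by ring] at h
      rw [h, Finset.sum_mul, Finset.sum_mul, Finset.sum_mul]
      apply Finset.sum_congr rfl
      intro i _
      ring
    rw [hpow, intervalIntegral.integral_finset_sum ?hints2]
    case hints2 =>
      intro i _
      have hfe : (fun t : ℝ => ((-1:ℝ)^(n-k-i) * ((n-k).choose i : ℝ))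
            * ((t+1)^i * (jacobiR n α β).eval t * (1 - t) ^ (α + (k:ℝ)) * (1 + t) ^ β))
          = fun t => (Polynomial.C ((-1:ℝ)^(n-k-i) * ((n-k).choose i : ℝ))
              * (Polynomial.X + 1)^i * jacobiR n α β).eval t * (1-t)^(α+(k:ℝ)) * (1+t)^β := by
        funext t
        simp only [Polynomial.eval_mul, Polynomial.eval_pow, Polynomial.eval_add,
          Polynomial.eval_one, Polynomial.eval_C, Polynomial.eval_X]
        ring
      rw [hfe]
      exact integrandInt _ hak hβ
    rw [Finset.sum_range_succ]
    rw [Finset.sum_eq_zero (fun i hi => by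
      rw [intervalIntegral.integral_const_mul,
        coreZero n k i α β hβ hak hak0 hine (by
          have := Finset.mem_range.mp hi
          omega), mul_zero]), zero_add]
    rw [intervalIntegral.integral_const_mul, Nat.sub_self, pow_zero, Nat.choose_self]
    simp only [Nat.cast_one, one_mul]
    exact coreNe n k (n-k) α β hβ hak hak0 hine (by omega)
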